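/- Suppose z⁰ ∈ ℂⁿ satisfies ∂W/∂z_j(z⁰) = 0 for every j with q_j ≤ 2. Then along the path z(α) = (e^{q₁α}z₁⁰,…,e^{qₙα}zₙ⁰) with α ∈ ℝ, the scalar potential satisfies V(z(α)) → 0 as α → +∞; in particular, the infimum of V over ℂⁿ is 0 (supersymmetry is restored asymptotically along a runaway direction or at a supersymmetric vacuum). -/

import Mathlib

open Complex Filter Topology

/-- Let `W : ℂⁿ → ℂ` be holomorphic with R-charge 2 under the complexified
R-symmetry, and let `V(z) = Σⱼ |∂W/∂z_j(z)|²`. If `z⁰` satisfies `∂W/∂z_j(z⁰) = 0` for every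
`j` with `q_j ≤ 2`, then along the path `z(α) = (e^{q₁α}z₁⁰,…,e^{qₙα}zₙ⁰)`, `α ∈ ℝ`, one has
`V(z(α)) → 0` as `α → +∞`; in particular `inf V = 0` over `ℂⁿ`. -/
theorem runaway_atTop_restores_susy
    (n : ℕ) (W : (Fin n → ℂ) → ℂ) (hW : Differentiable ℂ W)
    (q : Fin n → ℝ)
    (hR : ∀ (α : ℂ) (z : Fin n → ℂ),
      W (fun j => Complex.exp ((q j : ℂ) * α) * z j) = Complex.exp (2 * α) * W z)
    (V : (Fin n → ℂ) → ℝ)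
    (hV : ∀ z, V z = ∑ j, ‖fderiv ℂ W z (Pi.single j 1)‖ ^ 2)
    (z0 : Fin n → ℂ)
    (hz0 : ∀ j, q j ≤ 2 → fderiv ℂ W z0 (Pi.single j 1) = 0) :
    Tendsto (fun α : ℝ => V (fun j => Complex.exp ((q j : ℂ) * (α : ℂ)) * z0 j))
      atTop (nhds 0) ∧
    IsGLB (Set.range V) 0 := by
  -- key derivative identity
  have key : ∀ (α : ℂ) (j : Fin n),
      fderiv ℂ W (fun k => Complex.exp ((q k : ℂ) * α) * z0 k) (Pi.single j 1)
        = Complex.exp ((2 - (q j : ℂ)) * α) * fderiv ℂ W z0 (Pi.single j 1) := by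
    intro α j
    set L : (Fin n → ℂ) →L[ℂ] (Fin n → ℂ) :=
      ContinuousLinearMap.pi (fun k => Complex.exp ((q k : ℂ) * α) • ContinuousLinearMap.proj k)
      with hL
    have hLz : ∀ z : Fin n → ℂ, L z = fun k => Complex.exp ((q k : ℂ) * α) * z k := by
      intro z; funext k; simp [hL]
    have hcomp : (fun z => W (L z)) = fun z => Complex.exp (2 * α) * W z := by
      funext z; rw [hLz]; exact hR α z
    have hD1 : fderiv ℂ (fun z => W (L z)) z0
        = (fderiv ℂ W (L z0)).comp L := by
      rw [show (fun z => W (L z)) = W ∘ L from rfl]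
      rw [fderiv_comp z0 (hW _) L.differentiableAt, L.fderiv]
    have hD2 : fderiv ℂ (fun z => Complex.exp (2 * α) * W z) z0
        = Complex.exp (2 * α) • fderiv ℂ W z0 := fderiv_const_mul (hW z0) _
    have hEq : (fderiv ℂ W (L z0)).comp L = Complex.exp (2 * α) • fderiv ℂ W z0 := by
      rw [← hD1, hcomp, hD2]
    have h := congrFun (congrArg (DFunLike.coe) hEq) (Pi.single j 1)
    have hLs : L (Pi.single j 1) = Complex.exp ((q j : ℂ) * α) • (Pi.single j 1 : Fin n → ℂ) := by
      funext k
      by_cases hk : k = j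
      · subst hk; simp [hL]
      · simp [hL, Pi.single_eq_of_ne hk]
    rw [ContinuousLinearMap.comp_apply, hLs, map_smul] at h
    have hz : fderiv ℂ W (fun k => Complex.exp ((q k : ℂ) * α) * z0 k)
        = fderiv ℂ W (L z0) := by rw [hLz]
    rw [hz]
    have hne : Complex.exp ((q j : ℂ) * α) ≠ 0 := Complex.exp_ne_zero _
    simp only [ContinuousLinearMap.smul_apply, smul_eq_mul] at h
    apply mul_left_cancel₀ hne
    rw [h, ← mul_assoc, ← Complex.exp_add]
    ring_nf
  -- norms along the path
  have hterm : ∀ (α : ℝ) (j : Fin n),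
      ‖fderiv ℂ W (fun k => Complex.exp ((q k : ℂ) * (α : ℂ)) * z0 k) (Pi.single j 1)‖ ^ 2
        = (Real.exp ((2 - q j) * α)) ^ 2 * ‖fderiv ℂ W z0 (Pi.single j 1)‖ ^ 2 := by
    intro α j
    rw [key, norm_mul, mul_pow]
    congr 2
    rw [Complex.norm_exp]
    congr 1
    simp [Complex.mul_re]
  have htend : Tendsto (fun α : ℝ => V (fun j => Complex.exp ((q j : ℂ) * (α : ℂ)) * z0 j))
      atTop (nhds 0) := by
    have : ∀ α : ℝ, V (fun j => Complex.exp ((q j : ℂ) * (α : ℂ)) * z0 j)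
        = ∑ j, (Real.exp ((2 - q j) * α)) ^ 2 * ‖fderiv ℂ W z0 (Pi.single j 1)‖ ^ 2 := by
      intro α; rw [hV]; exact Finset.sum_congr rfl fun j _ => hterm α j
    simp only [this]
    rw [show (0:ℝ) = ∑ _j : Fin n, (0:ℝ) by simp]
    apply tendsto_finset_sum
    intro j _
    by_cases hq : q j ≤ 2
    · simp [hz0 j hq]
    · push_neg at hq
      have h1 : Tendsto (fun α : ℝ => (2 - q j) * α) atTop atBot :=
        (tendsto_const_mul_atBot_of_neg (by linarith)).mpr tendsto_id
      have h2 : Tendsto (fun α : ℝ => Real.exp ((2 - q j) * α)) atTop (nhds 0) :=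
        Real.tendsto_exp_atBot.comp h1
      have := ((h2.pow 2).mul_const (‖fderiv ℂ W z0 (Pi.single j 1)‖ ^ 2))
      simpa using this
  refine ⟨htend, ?_, ?_⟩
  · rintro v ⟨z, rfl⟩
    rw [hV]
    positivity
  · intro b hb
    have : ∀ α : ℝ, b ≤ V (fun j => Complex.exp ((q j : ℂ) * (α : ℂ)) * z0 j) :=
      fun α => hb ⟨_, rfl⟩
    exact le_of_tendsto_of_tendsto tendsto_const_nhds htend (Eventually.of_forall this)
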